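/- Let Γ : ℝ → ℝⁿ be a smooth curve, ℓ > 0, r : ℝ → ℝⁿ a curve with values in the unit sphere, and γ(t) = Γ(t) + ℓ·r(t). Then the vector γ(t) − Γ(t) is tangent to γ at γ(t) for all t if and only if r satisfies the bicycle equation ℓ·ṙ = −v + (v·r)r, where v = Γ̇. -/

import Mathlib

open RealInnerProductSpace

/-- The "no-skid" condition (the segment γ−Γ is tangent to the rear track γ)
is equivalent to the bicycle equation ℓ·ṙ = −v + (v·r)r. -/
theorem bicycle_equation_iff_tangent
    {n : ℕ} (Γ r : ℝ → EuclideanSpace ℝ (Fin n)) (ℓ : ℝ) (hℓ : 0 < ℓ)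
    (hΓ : ContDiff ℝ 1 Γ) (hr : Differentiable ℝ r)
    (hunit : ∀ t, ‖r t‖ = 1)
    (γ : ℝ → EuclideanSpace ℝ (Fin n)) (hγ : γ = fun t => Γ t + ℓ • r t) :
    (∀ t, ∃ c : ℝ, deriv γ t = c • (γ t - Γ t)) ↔
      (∀ t, ℓ • deriv r t = -deriv Γ t + ⟪deriv Γ t, r t⟫ • r t) := by
  have hΓd : Differentiable ℝ Γ := hΓ.differentiable one_ne_zero
  -- orthogonality of r and its derivative
  have horth : ∀ t, ⟪deriv r t, r t⟫ = 0 := by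
    intro t
    have h1 : HasDerivAt (fun t => ⟪r t, r t⟫)
        (⟪r t, deriv r t⟫ + ⟪deriv r t, r t⟫) t :=
      (hr t).hasDerivAt.inner ℝ (hr t).hasDerivAt
    have h2 : (fun t => ⟪r t, r t⟫) = fun _ : ℝ => (1 : ℝ) := by
      funext s
      rw [real_inner_self_eq_norm_sq, hunit]; norm_num
    rw [h2] at h1
    have h3 := h1.deriv
    rw [deriv_const] at h3
    have h4 := real_inner_comm (deriv r t) (r t)
    linarith
  have hderivγ : ∀ t, deriv γ t = deriv Γ t + ℓ • deriv r t := by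
    intro t
    rw [hγ]
    exact (((hΓd t).hasDerivAt).add (((hr t).hasDerivAt).const_smul ℓ)).deriv
  have hdiff : ∀ t, γ t - Γ t = ℓ • r t := by
    intro t; rw [hγ]; module
  constructor
  · intro h t
    obtain ⟨c, hc⟩ := h t
    rw [hderivγ, hdiff] at hc
    -- take inner product with r t
    have hcℓ : c * ℓ = ⟪deriv Γ t, r t⟫ := by
      have := congrArg (fun x => ⟪x, r t⟫) hc
      simp only [inner_add_left, inner_smul_left, conj_trivial,
        real_inner_self_eq_norm_sq, hunit, horth] at this
      nlinarith [this]
    have : ℓ • deriv r t = (c * ℓ) • r t - deriv Γ t := by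
      rw [smul_smul] at hc
      rw [← hc]; abel
    rw [this, hcℓ]; abel
  · intro h t
    refine ⟨⟪deriv Γ t, r t⟫ / ℓ, ?_⟩
    rw [hderivγ, hdiff, h t, smul_smul, div_mul_cancel₀ _ hℓ.ne']
    abel
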